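/- Let X and Y be normed spaces, Z a reflexive Banach space, and κ_X : Z → X and κ_Y : Z → Y compact linear maps such that κ_X z = 0 implies κ_Y z = 0 for all z ∈ Z. Let f : [0,∞) → [0,∞) be continuous, submultiplicative, with f(x) > 0 for all x > 0 and lim_{x→0} f(x)/x² = 0. Then sup_{z ∈ Z} [ −f(‖κ_X z‖_X) + ‖κ_Y z‖_Y² − ½‖z‖_Z² ] < ∞. -/

import Mathlib

open Filter Topology

set_option maxHeartbeats 4000000 in
/-- Let `X`, `Y` be normed spaces, `Z` a reflexive Banach space, and
`κX : Z → X`, `κY : Z → Y` compact linear maps such that `κX z = 0` implies `κY z = 0`.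
Let `f : [0,∞) → [0,∞)` be continuous, submultiplicative, positive on `(0,∞)`, with
`f(x)/x² → 0` as `x → 0`.  Then `sup_z [−f(‖κX z‖) + ‖κY z‖² − ½‖z‖²] < ∞`. -/
theorem statement_5 {X Y Z : Type}
    [NormedAddCommGroup X] [NormedSpace ℝ X]
    [NormedAddCommGroup Y] [NormedSpace ℝ Y]
    [NormedAddCommGroup Z] [NormedSpace ℝ Z] [CompleteSpace Z]
    (hrefl : Function.Surjective (NormedSpace.inclusionInDoubleDual ℝ Z))
    (κX : Z →ₗ[ℝ] X) (κY : Z →ₗ[ℝ] Y)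
    (hκX : IsCompactOperator (⇑κX)) (hκY : IsCompactOperator (⇑κY))
    (hker : ∀ z : Z, κX z = 0 → κY z = 0)
    (f : ℝ → ℝ)
    (hcont : ContinuousOn f (Set.Ici 0))
    (hnonneg : ∀ x : ℝ, 0 ≤ x → 0 ≤ f x)
    (hsub : ∀ x y : ℝ, 0 ≤ x → 0 ≤ y → f (x * y) ≤ f x * f y)
    (hpos : ∀ x : ℝ, 0 < x → 0 < f x)
    (hlim : Tendsto (fun x => f x / x ^ 2) (𝓝[>] (0 : ℝ)) (𝓝 0)) :
    BddAbove (Set.range fun z : Z => -f ‖κX z‖ + ‖κY z‖ ^ 2 - ‖z‖ ^ 2 / 2) := by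
  by_contra hbdd
  rw [not_bddAbove_iff] at hbdd
  have hzex : ∀ n : ℕ, ∃ zz : Z, (n : ℝ) < -f ‖κX zz‖ + ‖κY zz‖ ^ 2 - ‖zz‖ ^ 2 / 2 := by
    intro n
    obtain ⟨y, ⟨zz, rfl⟩, hy⟩ := hbdd (n : ℝ)
    exact ⟨zz, hy⟩
  choose z hzlt using hzex
  have hf0 : ∀ zz : Z, 0 ≤ f ‖κX zz‖ := fun zz => hnonneg _ (norm_nonneg _)
  let KX : Z →L[ℝ] X := ⟨κX, hκX.continuous⟩
  let KY : Z →L[ℝ] Y := ⟨κY, hκY.continuous⟩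
  set M : ℝ := ‖KY‖ with hMdef
  have hMnn : (0:ℝ) ≤ M := norm_nonneg _
  have hKYle : ∀ zz : Z, ‖κY zz‖ ≤ M * ‖zz‖ := fun zz => KY.le_opNorm zz
  have hKY2 : ∀ zz : Z, ‖κY zz‖ ^ 2 ≤ M ^ 2 * ‖zz‖ ^ 2 := by
    intro zz
    have h := hKYle zz
    nlinarith only [h, norm_nonneg (κY zz), norm_nonneg zz]
  have hg_le : ∀ n : ℕ, (n : ℝ) < M ^ 2 * ‖z n‖ ^ 2 := by
    intro n
    have h1 := hzlt n
    have h3 := hf0 (z n)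
    nlinarith only [h1, h3, hKY2 (z n), sq_nonneg ‖z n‖]
  have hMpos : (0:ℝ) < M := by
    rcases eq_or_lt_of_le hMnn with h | h
    · exfalso; have := hg_le 1; rw [← h] at this; norm_num at this
    · exact h
  -- normalized sequence
  set w : ℕ → Z := fun n => ‖z n‖⁻¹ • z n with hwdef
  have hwball : ∀ n, w n ∈ Metric.closedBall (0 : Z) 1 := by
    intro n
    rw [Metric.mem_closedBall, dist_zero_right]
    rcases eq_or_ne (z n) 0 with h | h
    · simp [hwdef, h]
    · rw [hwdef]
      simp only [norm_smul, norm_inv, norm_norm]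
      rw [inv_mul_cancel₀ (norm_ne_zero_iff.mpr h)]
  -- ultrafilter
  set U : Ultrafilter ℕ := Ultrafilter.of atTop with hUdef
  have hUle : (U : Filter ℕ) ≤ atTop := Ultrafilter.of_le _
  -- limit of κX ∘ w along U
  obtain ⟨SX, hSXc, hSXsub⟩ := hκX.image_closedBall_subset_compact (𝕜₁ := ℝ) (f := κX) 1
  obtain ⟨x, -, hxle⟩ := hSXc.ultrafilter_le_nhds (U.map fun n => κX (w n)) (by
    rw [Ultrafilter.coe_map, le_principal_iff, mem_map]
    exact Filter.univ_mem' fun n => hSXsub ⟨w n, hwball n, rfl⟩)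
  rw [Ultrafilter.coe_map] at hxle
  have hxconv : Tendsto (fun n => κX (w n)) (U : Filter ℕ) (𝓝 x) := hxle
  obtain ⟨SY, hSYc, hSYsub⟩ := hκY.image_closedBall_subset_compact (𝕜₁ := ℝ) (f := κY) 1
  obtain ⟨y, -, hyle⟩ := hSYc.ultrafilter_le_nhds (U.map fun n => κY (w n)) (by
    rw [Ultrafilter.coe_map, le_principal_iff, mem_map]
    exact Filter.univ_mem' fun n => hSYsub ⟨w n, hwball n, rfl⟩)
  rw [Ultrafilter.coe_map] at hyle
  have hyconv : Tendsto (fun n => κY (w n)) (U : Filter ℕ) (𝓝 y) := hyle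
  -- weak limit via reflexivity
  set ι := NormedSpace.inclusionInDoubleDual ℝ Z with hιdef
  set φn : ℕ → WeakDual ℝ (StrongDual ℝ Z) :=
    fun n => StrongDual.toWeakDual (ι (w n)) with hφndef
  have hφmem : ∀ n, φn n ∈ WeakDual.toStrongDual ⁻¹' Metric.closedBall 0 1 := by
    intro n
    simp only [Set.mem_preimage, Metric.mem_closedBall, dist_zero_right]
    refine (dist_zero_right (WeakDual.toStrongDual (φn n))).trans_le ?_
    calc ‖WeakDual.toStrongDual (φn n)‖ = ‖ι (w n)‖ := rfl
      _ ≤ ‖w n‖ := NormedSpace.double_dual_bound ℝ Z (w n)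
      _ ≤ 1 := by simpa [dist_zero_right] using hwball n
  obtain ⟨φ, -, hφle⟩ := (WeakDual.isCompact_closedBall (𝕜 := ℝ)
      (E := StrongDual ℝ Z) 0 1).ultrafilter_le_nhds (U.map φn) (by
    rw [Ultrafilter.coe_map, le_principal_iff, mem_map]
    exact Filter.univ_mem' fun n => hφmem n)
  rw [Ultrafilter.coe_map] at hφle
  have hφconv : Tendsto φn (U : Filter ℕ) (𝓝 φ) := hφle
  obtain ⟨wl, hwl⟩ := hrefl (WeakDual.toStrongDual φ)
  have heval : ∀ ψ : StrongDual ℝ Z,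
      Tendsto (fun n => ψ (w n)) (U : Filter ℕ) (𝓝 (ψ wl)) := by
    intro ψ
    have h := tendsto_iff_forall_eval_tendsto_topDualPairing.mp hφconv ψ
    have h1 : (fun n => (topDualPairing ℝ (StrongDual ℝ Z)) (φn n) ψ)
        = fun n => ψ (w n) := rfl
    have h2 : (topDualPairing ℝ (StrongDual ℝ Z)) φ ψ = ψ wl := by
      have : ι wl ψ = ψ wl := rfl
      rw [← this, hwl]; rfl
    rw [h1, h2] at h
    exact h
  -- identify limits
  have hxeq : x = κX wl := by
    rw [NormedSpace.eq_iff_forall_dual_eq (𝕜 := ℝ)]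
    intro g
    have h1 : Tendsto (fun n => g (κX (w n))) (U : Filter ℕ) (𝓝 (g x)) :=
      (g.continuous.tendsto x).comp hxconv
    have h2 : Tendsto (fun n => g (κX (w n))) (U : Filter ℕ) (𝓝 (g (κX wl))) := heval (g.comp KX)
    exact tendsto_nhds_unique h1 h2
  have hyeq : y = κY wl := by
    rw [NormedSpace.eq_iff_forall_dual_eq (𝕜 := ℝ)]
    intro g
    have h1 : Tendsto (fun n => g (κY (w n))) (U : Filter ℕ) (𝓝 (g y)) :=
      (g.continuous.tendsto y).comp hyconv
    have h2 : Tendsto (fun n => g (κY (w n))) (U : Filter ℕ) (𝓝 (g (κY wl))) := heval (g.comp KY)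
    exact tendsto_nhds_unique h1 h2
  -- κY wl ≠ 0
  have hzpos : ∀ n : ℕ, 1 ≤ n → 0 < ‖z n‖ := by
    intro n hn
    have h := hg_le n
    have hn' : (1:ℝ) ≤ (n:ℝ) := by exact_mod_cast hn
    rcases (norm_nonneg (z n)).lt_or_eq with h0 | h0
    · exact h0
    · exfalso; rw [← h0] at h; norm_num at h; linarith only [h, hn']
  have hwnorm : ∀ n : ℕ, 1 ≤ n → 1/2 ≤ ‖κY (w n)‖ ^ 2 := by
    intro n hn
    have h1 := hzlt n
    have hp := hzpos n hn
    have hn' : (1:ℝ) ≤ (n:ℝ) := by exact_mod_cast hn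
    have h2 : ‖z n‖ ^ 2 / 2 < ‖κY (z n)‖ ^ 2 := by nlinarith only [h1, hn', hf0 (z n)]
    have hκYw : ‖κY (w n)‖ = ‖z n‖⁻¹ * ‖κY (z n)‖ := by
      have he : κY (w n) = ‖z n‖⁻¹ • κY (z n) := by rw [hwdef]; simp [map_smul]
      rw [he, norm_smul, norm_inv, norm_norm]
    have h3 : ‖κY (w n)‖ ^ 2 = ‖κY (z n)‖ ^ 2 / ‖z n‖ ^ 2 := by
      rw [hκYw]; field_simp
    rw [h3, le_div_iff₀ (by positivity)]
    nlinarith only [h2]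
  have hy2 : 1/2 ≤ ‖y‖ ^ 2 := by
    have hco : Tendsto (fun n => ‖κY (w n)‖ ^ 2) (U : Filter ℕ) (𝓝 (‖y‖ ^ 2)) :=
      (hyconv.norm).pow 2
    refine ge_of_tendsto hco ?_
    have hev : ∀ᶠ n in (U : Filter ℕ), 1 ≤ n := hUle (eventually_ge_atTop 1)
    exact hev.mono fun n hn => hwnorm n hn
  have hyne : κY wl ≠ 0 := by
    rw [← hyeq]
    intro h
    rw [h] at hy2
    norm_num at hy2
  have hxne : κX wl ≠ 0 := fun h => hyne (hker wl h)
  set δ : ℝ := ‖κX wl‖ with hδdef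
  have hδpos : 0 < δ := norm_pos_iff.mpr hxne
  have hxnorm : Tendsto (fun n => ‖κX (w n)‖) (U : Filter ℕ) (𝓝 δ) := by
    rw [hδdef, ← hxeq]; exact hxconv.norm
  have hSx : ∀ᶠ n in (U : Filter ℕ), δ/2 ≤ ‖κX (w n)‖ :=
    hxnorm.eventually (eventually_ge_nhds (by linarith only [hδpos]))
  -- superquadratic growth of f
  have hf1 : 0 < f 1 := hpos 1 one_pos
  set K : ℝ := (4*M^2 + 4)/δ^2 with hKdef
  have hK : 0 < K := by positivity
  set ε : ℝ := f 1 / K with hεdef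
  have hε : 0 < ε := by positivity
  obtain ⟨η, hη, hηP⟩ : ∃ η > (0:ℝ), ∀ t : ℝ, 0 < t → t < η → f t / t ^ 2 < ε := by
    have h := hlim.eventually (gt_mem_nhds hε)
    rw [eventually_nhdsWithin_iff, Metric.eventually_nhds_iff] at h
    obtain ⟨η, hη, h⟩ := h
    exact ⟨η, hη, fun t ht htη =>
      h (by rw [Real.dist_eq, sub_zero, abs_of_pos ht]; exact htη) ht⟩
  have hflb : ∀ t : ℝ, 2/η ≤ t → K * t ^ 2 ≤ f t := by
    intro t ht
    have htpos : 0 < t := lt_of_lt_of_le (by positivity) ht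
    have hinv : 0 < t⁻¹ := by positivity
    have h2 : 2 ≤ t * η := by rw [div_le_iff₀ hη] at ht; linarith only [ht]
    have hti : t * t⁻¹ = 1 := mul_inv_cancel₀ htpos.ne'
    have hinvlt : t⁻¹ < η := by nlinarith only [h2, hti, htpos, hη, hinv]
    have h4 : f t⁻¹ < ε * (t⁻¹) ^ 2 := by
      have := hηP t⁻¹ hinv hinvlt
      rwa [div_lt_iff₀ (by positivity)] at this
    have hsub1 : f 1 ≤ f t * f t⁻¹ := by
      have h := hsub t t⁻¹ htpos.le hinv.le
      rwa [hti] at h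
    have hfinv : 0 < f t⁻¹ := hpos _ hinv
    have hft : 0 < f t := hpos _ htpos
    have hεK : ε * K = f 1 := by rw [hεdef]; field_simp
    have hsq : t ^ 2 * (t⁻¹) ^ 2 = 1 := by field_simp
    -- f 1 ≤ f t * f t⁻¹ < f t * ε * t⁻²  ⇒  K t² = f1 t²/ε ≤ f t
    have h5 : f t * f t⁻¹ ≤ f t * (ε * (t⁻¹) ^ 2) :=
      mul_le_mul_of_nonneg_left h4.le hft.le
    have h6 : f 1 * t ^ 2 ≤ f t * ε := by
      have := mul_le_mul_of_nonneg_right (le_trans hsub1 h5) (sq_nonneg t)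
      calc f 1 * t ^ 2 ≤ f t * (ε * (t⁻¹) ^ 2) * t ^ 2 := this
        _ = f t * ε * (t ^ 2 * (t⁻¹) ^ 2) := by ring
        _ = f t * ε := by rw [hsq, mul_one]
    nlinarith only [h6, hεK, hε, hK, hft, sq_nonneg t]
  -- collect eventual facts along U and derive contradiction
  set C : ℝ := 4 / (η * δ) with hCdef
  have hCpos : 0 < C := by positivity
  have hS4 : ∀ᶠ n in atTop, C ≤ ‖z n‖ := by
    filter_upwards [eventually_ge_atTop ⌈C ^ 2 * M ^ 2⌉₊] with n hn
    have h1 : C ^ 2 * M ^ 2 ≤ (n : ℝ) :=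
      le_trans (Nat.le_ceil _) (by exact_mod_cast hn)
    have h2 := hg_le n
    have hM2 : 0 < M ^ 2 := by positivity
    by_contra hcon
    push_neg at hcon
    have h3 : ‖z n‖ ^ 2 < C ^ 2 := by nlinarith only [hcon, hCpos, norm_nonneg (z n)]
    nlinarith only [h1, h2, h3, hM2]
  have hfin : ∀ᶠ n in (U : Filter ℕ), False := by
    filter_upwards [hUle (eventually_ge_atTop 1), hUle hS4, hSx] with n hn1 hn4 hnx
    have hp := hzpos n hn1
    have hXz : ‖κX (z n)‖ = ‖z n‖ * ‖κX (w n)‖ := by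
      have he : κX (w n) = ‖z n‖⁻¹ • κX (z n) := by rw [hwdef]; simp [map_smul]
      rw [he, norm_smul, norm_inv, norm_norm]
      field_simp
    have ht1 : 2/η ≤ ‖κX (z n)‖ := by
      have hmul : C * (δ/2) ≤ ‖z n‖ * ‖κX (w n)‖ :=
        mul_le_mul hn4 hnx (by positivity) (norm_nonneg _)
      have hCδ : C * (δ/2) = 2/η := by rw [hCdef]; field_simp; ring
      rw [hXz]; linarith only [hCδ ▸ hmul]
    have hflow := hflb _ ht1
    have ht2 : (δ/2) * ‖z n‖ ≤ ‖κX (z n)‖ := by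
      rw [hXz]; nlinarith only [hnx, norm_nonneg (z n)]
    have hKδ : K * ((δ/2) * ‖z n‖) ^ 2 = (M ^ 2 + 1) * ‖z n‖ ^ 2 := by
      rw [hKdef]; field_simp; ring
    have hlow : (M ^ 2 + 1) * ‖z n‖ ^ 2 ≤ f ‖κX (z n)‖ := by
      have hmono : ((δ/2) * ‖z n‖) ^ 2 ≤ ‖κX (z n)‖ ^ 2 := by
        have h0 : 0 ≤ (δ/2) * ‖z n‖ := by positivity
        nlinarith only [ht2, h0]
      have := mul_le_mul_of_nonneg_left hmono hK.le
      linarith only [hflow, hKδ ▸ this]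
    have h1 := hzlt n
    have hn1' : (1:ℝ) ≤ (n:ℝ) := by exact_mod_cast hn1
    nlinarith only [h1, hn1', hlow, hKY2 (z n), sq_nonneg ‖z n‖]
  obtain ⟨n, hn⟩ := hfin.exists
  exact hn
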